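/- arXiv:0906.4073 — 7 statements merged into one kernel-verified Lean document; each statement's English description precedes it below -/
import Mathlib

section
/- Let ν be a non-degenerate probability measure with support bounded above by B = max{0, sup supp(ν)}. Then the mean function m(θ) = (M(θ)-1)/(θ M(θ)), where M(θ) = ∫ 1/(1-θx) dν(x), is strictly increasing on (0, 1/B). -/
open MeasureTheory Real Set Filter
open scoped ENNReal

private lemma eq_dirac_of_singleton_one (ν : Measure ℝ) [IsProbabilityMeasure ν] {c : ℝ}
    (h : ν {c} = 1) : ν = Measure.dirac c := by
  ext s hs
  rw [Measure.dirac_apply' _ hs]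
  by_cases hc : c ∈ s
  · rw [Set.indicator_of_mem hc]
    refine le_antisymm prob_le_one ?_
    calc (1 : ℝ≥0∞) = ν {c} := h.symm
      _ ≤ ν s := measure_mono (Set.singleton_subset_iff.2 hc)

  · rw [Set.indicator_of_notMem hc]
    have h0 : ν {c}ᶜ = 0 := by
      have h2 := measure_compl (measurableSet_singleton c) (measure_ne_top ν _)
      rw [h, measure_univ] at h2
      simpa using h2
    exact measure_mono_null (Set.subset_compl_singleton_iff.mpr hc) h0

private lemma offdiag_pos (ν : Measure ℝ) [IsProbabilityMeasure ν]
    (hnd : ∀ c : ℝ, ν ≠ Measure.dirac c) :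
    0 < ν.prod ν {p : ℝ × ℝ | p.1 ≠ p.2} := by
  have hdiagm : MeasurableSet {p : ℝ × ℝ | p.1 = p.2} :=
    measurableSet_eq_fun measurable_fst measurable_snd
  have hlt : ∀ x : ℝ, ν {x} < 1 := by
    intro x
    rcases lt_or_eq_of_le (prob_le_one (μ := ν) (s := {x})) with h | h
    · exact h
    · exact absurd (eq_dirac_of_singleton_one ν h) (hnd x)
  have hmeas : Measurable fun x : ℝ => ν {x} := by
    have h1 := measurable_measure_prodMk_left (ν := ν) hdiagm
    convert h1 using 2 with x
    congr 1
    ext y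
    simp [eq_comm]
  have hdiag : ν.prod ν {p : ℝ × ℝ | p.1 = p.2} = ∫⁻ x, ν {x} ∂ν := by
    rw [Measure.prod_apply hdiagm]
    congr 1
    ext x
    congr 1
    ext y
    simp [eq_comm]
  have hint : ∫⁻ x, ν {x} ∂ν < 1 := by
    have h1 : ∫⁻ x, ν {x} ∂ν < ∫⁻ _, 1 ∂ν := by
      refine lintegral_strict_mono ?_ aemeasurable_const ?_ (ae_of_all _ hlt)
      · simp [← measure_univ (μ := ν)]
        exact (IsProbabilityMeasure.ne_zero ν)
      · refine ne_top_of_le_ne_top ?_ (lintegral_mono fun x => (hlt x).le)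
        simp
    simpa using h1
  have hcompl : {p : ℝ × ℝ | p.1 ≠ p.2} = {p : ℝ × ℝ | p.1 = p.2}ᶜ := rfl
  rw [hcompl, measure_compl hdiagm (measure_ne_top _ _), measure_univ, hdiag]
  exact tsub_pos_iff_lt.mpr hint

private lemma cheb_strict (ν : Measure ℝ) [IsProbabilityMeasure ν]
    (hoff : 0 < ν.prod ν {p : ℝ × ℝ | p.1 ≠ p.2}) {B : ℝ} (hsupp : ∀ᵐ x ∂ν, x ≤ B)
    {f g : ℝ → ℝ} (hf : Measurable f) (hg : Measurable g)
    {Cf Cg : ℝ} (hfb : ∀ x, x ≤ B → |f x| ≤ Cf) (hgb : ∀ x, x ≤ B → |g x| ≤ Cg)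
    (hfm : ∀ x, x ≤ B → ∀ y, y ≤ B → x < y → f x < f y)
    (hgm : ∀ x, x ≤ B → ∀ y, y ≤ B → x < y → g x < g y) :
    (∫ x, f x ∂ν) * (∫ x, g x ∂ν) < ∫ x, f x * g x ∂ν := by
  have hCf : 0 ≤ Cf := le_trans (abs_nonneg _) (hfb B le_rfl)
  have hCg : 0 ≤ Cg := le_trans (abs_nonneg _) (hgb B le_rfl)
  have hfi : Integrable f ν := by
    refine (integrable_const Cf).mono' hf.aestronglyMeasurable ?_
    exact hsupp.mono fun x hx => by simpa [Real.norm_eq_abs] using hfb x hx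
  have hgi : Integrable g ν := by
    refine (integrable_const Cg).mono' hg.aestronglyMeasurable ?_
    exact hsupp.mono fun x hx => by simpa [Real.norm_eq_abs] using hgb x hx
  have hfgi : Integrable (fun x => f x * g x) ν := by
    refine (integrable_const (Cf * Cg)).mono' (hf.mul hg).aestronglyMeasurable ?_
    refine hsupp.mono fun x hx => ?_
    rw [Real.norm_eq_abs, abs_mul]
    exact mul_le_mul (hfb x hx) (hgb x hx) (abs_nonneg _) hCf
  set F := ∫ x, f x ∂ν with hF
  set G := ∫ x, g x ∂ν with hG
  set C := ∫ x, f x * g x ∂ν with hC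
  set h : ℝ × ℝ → ℝ := fun p => (f p.1 - f p.2) * (g p.1 - g p.2) with hh
  -- a.e. both coordinates ≤ B
  have hae : ∀ᵐ p ∂ν.prod ν, p.1 ≤ B ∧ p.2 ≤ B := by
    rw [ae_iff]
    have hsub : {p : ℝ × ℝ | ¬(p.1 ≤ B ∧ p.2 ≤ B)} ⊆
        ({x : ℝ | ¬x ≤ B} ×ˢ univ) ∪ (univ ×ˢ {x : ℝ | ¬x ≤ B}) := by
      intro p hp
      simp only [Set.mem_setOf_eq, not_and_or] at hp
      rcases hp with hp | hp
      · exact Or.inl ⟨hp, mem_univ _⟩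
      · exact Or.inr ⟨mem_univ _, hp⟩
    have h0 : ν {x : ℝ | ¬x ≤ B} = 0 := by rw [← ae_iff] at *; exact hsupp
    refine measure_mono_null hsub (measure_union_null ?_ ?_)
    · rw [Measure.prod_prod, h0, zero_mul]
    · rw [Measure.prod_prod, h0, mul_zero]
  have hh_meas : Measurable h :=
    ((hf.comp measurable_fst).sub (hf.comp measurable_snd)).mul
      ((hg.comp measurable_fst).sub (hg.comp measurable_snd))
  have hh_nonneg : 0 ≤ᵐ[ν.prod ν] h := by
    refine hae.mono fun p ⟨h1, h2⟩ => ?_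
    simp only [Pi.zero_apply, hh]
    rcases lt_trichotomy p.1 p.2 with hlt | heq | hgt
    · nlinarith [hfm p.1 h1 p.2 h2 hlt, hgm p.1 h1 p.2 h2 hlt]
    · simp [heq]
    · nlinarith [hfm p.2 h2 p.1 h1 hgt, hgm p.2 h2 p.1 h1 hgt]
  have hh_int : Integrable h (ν.prod ν) := by
    refine (integrable_const ((Cf + Cf) * (Cg + Cg))).mono' hh_meas.aestronglyMeasurable ?_
    refine hae.mono fun p ⟨h1, h2⟩ => ?_
    rw [Real.norm_eq_abs, abs_mul]
    have e1 : |f p.1 - f p.2| ≤ Cf + Cf := by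
      have := abs_le.mp (hfb p.1 h1); have := abs_le.mp (hfb p.2 h2)
      rw [abs_le]; constructor <;> linarith
    have e2 : |g p.1 - g p.2| ≤ Cg + Cg := by
      have := abs_le.mp (hgb p.1 h1); have := abs_le.mp (hgb p.2 h2)
      rw [abs_le]; constructor <;> linarith
    exact mul_le_mul e1 e2 (abs_nonneg _) (by linarith)
  have key : ∀ x : ℝ, (∫ y, h (x, y) ∂ν) = f x * g x - f x * G - g x * F + C := by
    intro x
    have e : (fun y => h (x, y)) =
        fun y => f x * g x - f x * g y - g x * f y + f y * g y := by
      funext y; simp only [hh]; ring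
    have i1 : Integrable (fun y => f x * g x - f x * g y) ν :=
      (integrable_const _).sub (hgi.const_mul (f x))
    have i2 : Integrable (fun y => f x * g x - f x * g y - g x * f y) ν :=
      i1.sub (hfi.const_mul (g x))
    rw [e, integral_add i2 hfgi, integral_sub i1 (hfi.const_mul (g x)),
      integral_sub (integrable_const _) (hgi.const_mul (f x)),
      integral_const, integral_const_mul, integral_const_mul]
    simp [hF, hG, hC]
  have total : (∫ p, h p ∂ν.prod ν) = 2 * C - 2 * (F * G) := by
    rw [integral_prod _ hh_int]
    simp only [key]
    have i1 : Integrable (fun x => f x * g x - f x * G) ν := hfgi.sub (hfi.mul_const G)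
    have i2 : Integrable (fun x => f x * g x - f x * G - g x * F) ν :=
      i1.sub (hgi.mul_const F)
    rw [integral_add i2 (integrable_const C), integral_sub i1 (hgi.mul_const F),
      integral_sub hfgi (hfi.mul_const G),
      integral_const, integral_mul_const, integral_mul_const]
    simp only [measure_univ, ENNReal.toReal_one, probReal_univ, smul_eq_mul, one_mul, ← hF, ← hG, ← hC]
    ring
  have hpos : 0 < ∫ p, h p ∂ν.prod ν := by
    rw [integral_pos_iff_support_of_nonneg_ae hh_nonneg hh_int]
    have hbad : ν.prod ν {p : ℝ × ℝ | ¬(p.1 ≤ B ∧ p.2 ≤ B)} = 0 := by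
      rw [← ae_iff] at *; exact hae
    have hsub : {p : ℝ × ℝ | p.1 ≠ p.2} \ {p : ℝ × ℝ | ¬(p.1 ≤ B ∧ p.2 ≤ B)} ⊆
        Function.support h := by
      rintro p ⟨hne, hgood⟩
      simp only [Set.mem_setOf_eq, not_not] at hgood
      obtain ⟨h1, h2⟩ := hgood
      rcases lt_or_gt_of_ne hne with hlt | hgt
      · have e1 := hfm p.1 h1 p.2 h2 hlt
        have e2 := hgm p.1 h1 p.2 h2 hlt
        simp only [Function.mem_support, hh]
        intro hc
        nlinarith
      · have e1 := hfm p.2 h2 p.1 h1 hgt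
        have e2 := hgm p.2 h2 p.1 h1 hgt
        simp only [Function.mem_support, hh]
        intro hc
        nlinarith
    calc (0 : ℝ≥0∞) < ν.prod ν {p : ℝ × ℝ | p.1 ≠ p.2} := hoff
      _ = ν.prod ν ({p : ℝ × ℝ | p.1 ≠ p.2} \ {p : ℝ × ℝ | ¬(p.1 ≤ B ∧ p.2 ≤ B)}) :=
        (measure_diff_null hbad).symm
      _ ≤ ν.prod ν (Function.support h) := measure_mono hsub
  rw [total] at hpos
  linarith

section test
variable (ν : Measure ℝ) [IsProbabilityMeasure ν]

private lemma den_pos {B θ : ℝ} (hθ : 0 < θ) (hθB : θ * B < 1) {x : ℝ} (hx : x ≤ B) :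
    0 < 1 - θ * x := by nlinarith [mul_le_mul_of_nonneg_left hx hθ.le]

private lemma Mint {B θ : ℝ} (hsupp : ∀ᵐ x ∂ν, x ≤ B) (hθ : 0 < θ) (hθB : θ * B < 1) :
    Integrable (fun x => 1 / (1 - θ * x)) ν := by
  have hmeas : Measurable fun x : ℝ => 1 / (1 - θ * x) :=
    measurable_const.div ((measurable_const.sub (measurable_id.const_mul θ)))
  refine (integrable_const (1 / (1 - θ * B))).mono' hmeas.aestronglyMeasurable ?_
  refine hsupp.mono fun x hx => ?_
  have h1 := den_pos hθ hθB hx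
  have h2 := den_pos hθ hθB (le_refl B)
  rw [Real.norm_eq_abs, abs_of_pos (by positivity)]
  apply one_div_le_one_div_of_le h2
  nlinarith [mul_le_mul_of_nonneg_left hx hθ.le]

private lemma Mpos {B θ : ℝ} (hsupp : ∀ᵐ x ∂ν, x ≤ B) (hθ : 0 < θ) (hθB : θ * B < 1) :
    0 < ∫ x, 1 / (1 - θ * x) ∂ν := by
  have hnn : 0 ≤ᵐ[ν] fun x => 1 / (1 - θ * x) := by
    refine hsupp.mono fun x hx => ?_
    have := den_pos hθ hθB hx
    simp only [Pi.zero_apply]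
    positivity
  rw [integral_pos_iff_support_of_nonneg_ae hnn (Mint ν hsupp hθ hθB)]
  have hIic : ν (Set.Iic B) = 1 := by
    rw [← prob_compl_eq_zero_iff measurableSet_Iic]
    rw [ae_iff] at hsupp
    convert hsupp using 2
    ext; simp
  have hsub : Set.Iic B ⊆ Function.support fun x => 1 / (1 - θ * x) := by
    intro x hx
    have := den_pos hθ hθB (Set.mem_Iic.mp hx)
    simp only [Function.mem_support]
    positivity
  calc (0 : ℝ≥0∞) < 1 := by norm_num
    _ = ν (Set.Iic B) := hIic.symm
    _ ≤ ν (Function.support fun x => 1 / (1 - θ * x)) := measure_mono hsub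

end test

section test
variable (ν : Measure ℝ) [IsProbabilityMeasure ν]

private lemma den_pos' {B θ : ℝ} (hθ : 0 < θ) (hθB : θ * B < 1) {x : ℝ} (hx : x ≤ B) :
    0 < 1 - θ * x := by nlinarith [mul_le_mul_of_nonneg_left hx hθ.le]

private lemma fbound {B θ : ℝ} (hθ : 0 < θ) (hθB : θ * B < 1) :
    ∀ x, x ≤ B → |1 / (1 - θ * x)| ≤ 1 / (1 - θ * B) := by
  intro x hx
  have h1 := den_pos' hθ hθB hx
  have h2 := den_pos' hθ hθB (le_refl B)
  rw [abs_of_pos (by positivity)]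
  apply one_div_le_one_div_of_le h2
  nlinarith [mul_le_mul_of_nonneg_left hx hθ.le]

private lemma fmono {B θ : ℝ} (hθ : 0 < θ) (hθB : θ * B < 1) :
    ∀ x, x ≤ B → ∀ y, y ≤ B → x < y → 1 / (1 - θ * x) < 1 / (1 - θ * y) := by
  intro x hx y hy hxy
  have h1 := den_pos' hθ hθB hx
  have h2 := den_pos' hθ hθB hy
  apply one_div_lt_one_div_of_lt h2
  nlinarith [mul_lt_mul_of_pos_left hxy hθ]

private lemma fmeas (θ : ℝ) : Measurable fun x : ℝ => 1 / (1 - θ * x) :=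
  measurable_const.div (measurable_const.sub (measurable_id.const_mul θ))

end test

/-- The mean function m(θ) = (M(θ)-1)/(θ M(θ)) is strictly
increasing on the set {θ : 0 < θ, θ B < 1} (which is (0,1/B), with 1/0 = ∞). -/
theorem stmt4 (ν : Measure ℝ) [IsProbabilityMeasure ν]
    (hnd : ∀ c : ℝ, ν ≠ Measure.dirac c) (B : ℝ)
    (hB : 0 ≤ B) (hsupp : ∀ᵐ x ∂ν, x ≤ B) :
    StrictMonoOn
      (fun θ => ((∫ x, 1 / (1 - θ * x) ∂ν) - 1) / (θ * ∫ x, 1 / (1 - θ * x) ∂ν))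
      {θ : ℝ | 0 < θ ∧ θ * B < 1} := by
  intro a ha b hb hab
  obtain ⟨ha0, haB⟩ := ha
  obtain ⟨hb0, hbB⟩ := hb
  have hIa := Mint ν hsupp ha0 haB
  have hIb := Mint ν hsupp hb0 hbB
  have hMa := Mpos ν hsupp ha0 haB
  have hMb := Mpos ν hsupp hb0 hbB
  set Ma := ∫ x, 1 / (1 - a * x) ∂ν with hMa'
  set Mb := ∫ x, 1 / (1 - b * x) ∂ν with hMb'
  have hcheb : Ma * Mb < ∫ x, (1 / (1 - a * x)) * (1 / (1 - b * x)) ∂ν := by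
    exact cheb_strict ν (offdiag_pos ν hnd) hsupp (fmeas a) (fmeas b)
      (fbound ha0 haB) (fbound hb0 hbB) (fmono ha0 haB) (fmono hb0 hbB)
  have hid : b * Mb - a * Ma =
      (b - a) * ∫ x, (1 / (1 - a * x)) * (1 / (1 - b * x)) ∂ν := by
    have e1 : ∀ᵐ x ∂ν, b * (1 / (1 - b * x)) - a * (1 / (1 - a * x)) =
        (b - a) * ((1 / (1 - a * x)) * (1 / (1 - b * x))) := by
      refine hsupp.mono fun x hx => ?_
      have d1 := (den_pos' ha0 haB hx).ne'
      have d2 := (den_pos' hb0 hbB hx).ne'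
      rw [div_mul_div_comm, one_mul, mul_one_div, mul_one_div, div_sub_div _ _ d2 d1,
        mul_div_assoc', div_eq_div_iff (mul_ne_zero d2 d1) (mul_ne_zero d1 d2)]
      ring
    calc b * Mb - a * Ma
        = ∫ x, (b * (1 / (1 - b * x)) - a * (1 / (1 - a * x))) ∂ν := by
          rw [integral_sub (hIb.const_mul b) (hIa.const_mul a),
            integral_const_mul, integral_const_mul]
      _ = ∫ x, (b - a) * ((1 / (1 - a * x)) * (1 / (1 - b * x))) ∂ν :=
          integral_congr_ae e1
      _ = (b - a) * ∫ x, (1 / (1 - a * x)) * (1 / (1 - b * x)) ∂ν :=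
          integral_const_mul _ _
  show (Ma - 1) / (a * Ma) < (Mb - 1) / (b * Mb)
  rw [div_lt_div_iff₀ (by positivity) (by positivity)]
  nlinarith [mul_lt_mul_of_pos_left hcheb (sub_pos.mpr hab)]
end

section
/- Let ν be a non-degenerate probability measure with support bounded above by b ∈ ℝ, and let G(z) = ∫ 1/(z-x) dν(x) be its Cauchy transform. Then for all real b < z₁ < z₂: G(z₁) - G(z₂) > (z₂ - z₁) G(z₁) G(z₂). -/
open MeasureTheory Real Set Filter

/-- If the product measure gives zero mass off the diagonal, the measure is a dirac. -/
lemma offdiag_pos_of_not_dirac (ν : Measure ℝ) [IsProbabilityMeasure ν]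
    (hnd : ∀ c : ℝ, ν ≠ Measure.dirac c) :
    0 < (ν.prod ν) {p : ℝ × ℝ | p.1 ≠ p.2} := by
  by_contra h
  push_neg at h
  have h0 : (ν.prod ν) {p : ℝ × ℝ | p.1 ≠ p.2} = 0 := le_antisymm h (zero_le)
  have hdm : MeasurableSet {p : ℝ × ℝ | p.1 = p.2} :=
    measurableSet_eq_fun measurable_fst measurable_snd
  -- measure of the diagonal is 1
  have hdiag1 : (ν.prod ν) {p : ℝ × ℝ | p.1 = p.2} = 1 := by
    have hc := measure_compl hdm (measure_ne_top (ν.prod ν) _)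
    have hcc : {p : ℝ × ℝ | p.1 = p.2}ᶜ = {p : ℝ × ℝ | p.1 ≠ p.2} := rfl
    rw [hcc, h0, measure_univ] at hc
    exact le_antisymm prob_le_one (tsub_eq_zero_iff_le.mp hc.symm)
  -- rewrite diag measure via slices
  have hslice : (ν.prod ν) {p : ℝ × ℝ | p.1 = p.2} = ∫⁻ x, ν {x} ∂ν := by
    rw [Measure.prod_apply hdm]
    congr 1
    funext x
    congr 1
    ext y
    simp [eq_comm]
  have hF : Measurable fun x : ℝ => ν {x} := by
    have := measurable_measure_prodMk_left (ν := ν) hdm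
    convert this using 2 with x
    congr 1
    ext y
    simp [eq_comm]
  have hle1 : ∀ x : ℝ, ν {x} ≤ 1 := fun x => prob_le_one
  have hlint : ∫⁻ x, ν {x} ∂ν = 1 := by rw [← hslice, hdiag1]
  -- a.e. ν {x} = 1
  have hsub : ∫⁻ x, (1 - ν {x}) ∂ν = 0 := by
    rw [lintegral_sub hF (by rw [hlint]; exact ENNReal.one_ne_top)
      (ae_of_all _ fun x => hle1 x)]
    simp [hlint]
  have hae : ∀ᵐ x ∂ν, (1 : ENNReal) - ν {x} = 0 := by
    have := (lintegral_eq_zero_iff (measurable_const.sub hF)).mp hsub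
    filter_upwards [this] with x hx
    simpa using hx
  have hae1 : ∀ᵐ x ∂ν, ν {x} = 1 := by
    filter_upwards [hae] with x hx
    exact le_antisymm (hle1 x) (tsub_eq_zero_iff_le.mp hx)
  have hne : ν ≠ 0 := IsProbabilityMeasure.ne_zero ν
  haveI : (ae ν).NeBot := ae_neBot.mpr hne
  obtain ⟨c, hc⟩ := hae1.exists
  refine hnd c (Measure.ext fun s hs => ?_)
  rw [Measure.dirac_apply' _ hs]
  by_cases hcs : c ∈ s
  · rw [Set.indicator_of_mem hcs]
    refine le_antisymm prob_le_one ?_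
    calc (1 : ENNReal) = ν {c} := hc.symm
    _ ≤ ν s := measure_mono (Set.singleton_subset_iff.2 hcs)
  · rw [Set.indicator_of_notMem hcs]
    have h1 : ν {c}ᶜ = 0 := by
      have := measure_compl (measurableSet_singleton c) (measure_ne_top ν _)
      rw [hc, measure_univ] at this
      simpa using this
    exact measure_mono_null (fun x hx (hxc : x ∈ ({c} : Set ℝ)) => hcs (hxc ▸ hx)) h1

/-- For non-degenerate ν supported in (-∞,b] and b < z₁ < z₂,
G(z₁) - G(z₂) > (z₂ - z₁) G(z₁) G(z₂), where G is the Cauchy transform. -/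
theorem stmt5 (ν : Measure ℝ) [IsProbabilityMeasure ν]
    (hnd : ∀ c : ℝ, ν ≠ Measure.dirac c) (b : ℝ)
    (hsupp : ∀ᵐ x ∂ν, x ≤ b)
    (z₁ z₂ : ℝ) (h1 : b < z₁) (h12 : z₁ < z₂) :
    (z₂ - z₁) * (∫ x, 1 / (z₁ - x) ∂ν) * (∫ x, 1 / (z₂ - x) ∂ν)
      < (∫ x, 1 / (z₁ - x) ∂ν) - ∫ x, 1 / (z₂ - x) ∂ν := by
  have h2 : b < z₂ := lt_trans h1 h12
  set f : ℝ → ℝ := fun x => 1 / (z₁ - x) with hfdef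
  set g : ℝ → ℝ := fun x => 1 / (z₂ - x) with hgdef
  -- measurability
  have hfm : Measurable f := by fun_prop
  have hgm : Measurable g := by fun_prop
  -- integrability with explicit bounds
  have hbound : ∀ z : ℝ, b < z → ∀ x : ℝ, x ≤ b → |1 / (z - x)| ≤ 1 / (z - b) := by
    intro z hz x hx
    have h0 : (0:ℝ) < z - x := by linarith
    rw [abs_of_pos (by positivity)]
    exact one_div_le_one_div_of_le (by linarith) (by linarith)
  have hfI : Integrable f ν := by
    refine (integrable_const (1 / (z₁ - b))).mono' hfm.aestronglyMeasurable ?_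
    filter_upwards [hsupp] with x hx
    show ‖(1:ℝ) / (z₁ - x)‖ ≤ 1 / (z₁ - b)
    rw [Real.norm_eq_abs]
    exact hbound z₁ h1 x hx
  have hgI : Integrable g ν := by
    refine (integrable_const (1 / (z₂ - b))).mono' hgm.aestronglyMeasurable ?_
    filter_upwards [hsupp] with x hx
    show ‖(1:ℝ) / (z₂ - x)‖ ≤ 1 / (z₂ - b)
    rw [Real.norm_eq_abs]
    exact hbound z₂ h2 x hx
  have hfgI : Integrable (fun x => f x * g x) ν := by
    refine (integrable_const (1 / (z₁ - b) * (1 / (z₂ - b)))).mono'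
      (hfm.mul hgm).aestronglyMeasurable ?_
    filter_upwards [hsupp] with x hx
    show ‖(1:ℝ) / (z₁ - x) * ((1:ℝ) / (z₂ - x))‖ ≤ 1 / (z₁ - b) * (1 / (z₂ - b))
    rw [Real.norm_eq_abs, abs_mul]
    exact mul_le_mul (hbound z₁ h1 x hx) (hbound z₂ h2 x hx) (abs_nonneg _)
      (one_div_nonneg.mpr (by linarith))
  set μ := ν.prod ν with hμ
  set h : ℝ × ℝ → ℝ := fun p => (f p.1 - f p.2) * (g p.1 - g p.2) with hhdef
  -- the four product terms
  have i11 : Integrable (fun p : ℝ × ℝ => f p.1 * g p.1) μ := by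
    have := hfgI.mul_prod (integrable_const (1:ℝ)) (ν := ν)
    simpa using this
  have i22 : Integrable (fun p : ℝ × ℝ => f p.2 * g p.2) μ := by
    have := (integrable_const (1:ℝ)).mul_prod hfgI (μ := ν)
    simpa using this
  have i12 : Integrable (fun p : ℝ × ℝ => f p.1 * g p.2) μ := hfI.mul_prod hgI
  have i21 : Integrable (fun p : ℝ × ℝ => g p.1 * f p.2) μ := hgI.mul_prod hfI
  have hhI : Integrable h μ := by
    have : h = fun p => (f p.1 * g p.1 - f p.1 * g p.2) +
        (f p.2 * g p.2 - g p.1 * f p.2) := by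
      funext p; simp only [hhdef]; ring
    rw [this]
    exact (i11.sub i12).add (i22.sub i21)
  set A := ∫ x, f x * g x ∂ν with hA
  set B := ∫ x, f x ∂ν with hB
  set C := ∫ x, g x ∂ν with hC
  -- compute ∫ h
  have hint : ∫ p, h p ∂μ = 2 * A - 2 * (B * C) := by
    have e1 : ∫ p, h p ∂μ = (∫ p, (f p.1 * g p.1 - f p.1 * g p.2) ∂μ) +
        ∫ p, (f p.2 * g p.2 - g p.1 * f p.2) ∂μ := by
      have hrw : ∀ p : ℝ × ℝ, h p = (f p.1 * g p.1 - f p.1 * g p.2) +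
          (f p.2 * g p.2 - g p.1 * f p.2) := fun p => by simp only [hhdef]; ring
      simp_rw [hrw]
      exact integral_add (i11.sub i12) (i22.sub i21)
    rw [e1, integral_sub i11 i12, integral_sub i22 i21]
    have e11 : ∫ p : ℝ × ℝ, f p.1 * g p.1 ∂μ = A := by
      have := integral_prod_mul (μ := ν) (ν := ν) (fun x => f x * g x) (fun _ => (1:ℝ))
      simpa using this
    have e22 : ∫ p : ℝ × ℝ, f p.2 * g p.2 ∂μ = A := by
      have := integral_prod_mul (μ := ν) (ν := ν) (fun _ => (1:ℝ)) (fun x => f x * g x)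
      simpa using this
    have e12 : ∫ p : ℝ × ℝ, f p.1 * g p.2 ∂μ = B * C := integral_prod_mul f g
    have e21 : ∫ p : ℝ × ℝ, g p.1 * f p.2 ∂μ = C * B := integral_prod_mul g f
    rw [e11, e22, e12, e21]; ring
  -- a.e. both coordinates ≤ b
  have hsupp0 : ν {x : ℝ | ¬ x ≤ b} = 0 := by rw [← ae_iff]; exact hsupp
  have haegood : ∀ᵐ p ∂μ, p.1 ≤ b ∧ p.2 ≤ b := by
    have hA1 : μ {p : ℝ × ℝ | ¬ p.1 ≤ b} = 0 := by
      have : {p : ℝ × ℝ | ¬ p.1 ≤ b} = {x : ℝ | ¬ x ≤ b} ×ˢ Set.univ := by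
        ext p; simp
      rw [this, hμ, Measure.prod_prod, hsupp0, zero_mul]
    have hA2 : μ {p : ℝ × ℝ | ¬ p.2 ≤ b} = 0 := by
      have : {p : ℝ × ℝ | ¬ p.2 ≤ b} = Set.univ ×ˢ {x : ℝ | ¬ x ≤ b} := by
        ext p; simp
      rw [this, hμ, Measure.prod_prod, hsupp0, mul_zero]
    have e1 : ∀ᵐ p ∂μ, p.1 ≤ b := by rw [ae_iff]; exact hA1
    have e2 : ∀ᵐ p ∂μ, p.2 ≤ b := by rw [ae_iff]; exact hA2
    filter_upwards [e1, e2] with p hp1 hp2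
    exact ⟨hp1, hp2⟩
  -- strict monotonicity on (-∞, b]
  have hmono : ∀ z : ℝ, b < z → ∀ x y : ℝ, x ≤ b → y ≤ b → x < y →
      1 / (z - x) < 1 / (z - y) := by
    intro z hz x y hx hy hxy
    exact one_div_lt_one_div_of_lt (by linarith) (by linarith)
  have hpos : ∀ p : ℝ × ℝ, p.1 ≤ b → p.2 ≤ b → p.1 ≠ p.2 → 0 < h p := by
    intro p hp1 hp2 hne
    rcases lt_or_gt_of_ne hne with hlt | hgt
    · have hf' := hmono z₁ h1 p.1 p.2 hp1 hp2 hlt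
      have hg' := hmono z₂ h2 p.1 p.2 hp1 hp2 hlt
      exact mul_pos_of_neg_of_neg (by simpa [hhdef, hfdef] using sub_neg.mpr hf')
        (by simpa [hhdef, hgdef] using sub_neg.mpr hg')
    · have hf' := hmono z₁ h1 p.2 p.1 hp2 hp1 hgt
      have hg' := hmono z₂ h2 p.2 p.1 hp2 hp1 hgt
      exact mul_pos (by simpa [hhdef, hfdef] using sub_pos.mpr hf')
        (by simpa [hhdef, hgdef] using sub_pos.mpr hg')
  have hnonneg : 0 ≤ᵐ[μ] h := by
    filter_upwards [haegood] with p hp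
    rcases eq_or_ne p.1 p.2 with he | hne
    · simp [hhdef, he]
    · exact le_of_lt (hpos p hp.1 hp.2 hne)
  -- support has positive measure
  have hoff : 0 < μ {p : ℝ × ℝ | p.1 ≠ p.2} := offdiag_pos_of_not_dirac ν hnd
  have hsuppos : 0 < μ (Function.support h) := by
    have hgood0 : μ {p : ℝ × ℝ | ¬ (p.1 ≤ b ∧ p.2 ≤ b)} = 0 := by
      rw [← ae_iff]; exact haegood
    have hsubset : {p : ℝ × ℝ | p.1 ≠ p.2} ⊆
        Function.support h ∪ {p : ℝ × ℝ | ¬ (p.1 ≤ b ∧ p.2 ≤ b)} := by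
      intro p hp
      by_cases hg : p.1 ≤ b ∧ p.2 ≤ b
      · exact Or.inl (ne_of_gt (hpos p hg.1 hg.2 hp))
      · exact Or.inr hg
    calc 0 < μ {p : ℝ × ℝ | p.1 ≠ p.2} := hoff
    _ ≤ μ (Function.support h) + μ {p : ℝ × ℝ | ¬ (p.1 ≤ b ∧ p.2 ≤ b)} :=
      le_trans (measure_mono hsubset) (measure_union_le _ _)
    _ = μ (Function.support h) := by rw [hgood0, add_zero]
  have hIpos : 0 < ∫ p, h p ∂μ :=
    (integral_pos_iff_support_of_nonneg_ae hnonneg hhI).mpr hsuppos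
  have hAgt : B * C < A := by
    rw [hint] at hIpos; linarith
  -- finally: B - C = (z₂ - z₁) * A
  have hdiff : B - C = (z₂ - z₁) * A := by
    rw [hB, hC, ← integral_sub hfI hgI]
    rw [hA, ← integral_const_mul _ _]
    apply integral_congr_ae
    filter_upwards [hsupp] with x hx
    have hx1 : z₁ - x ≠ 0 := ne_of_gt (by linarith)
    have hx2 : z₂ - x ≠ 0 := ne_of_gt (by linarith)
    simp only [hfdef, hgdef]
    field_simp
    try ring
  have hz : (0:ℝ) < z₂ - z₁ := by linarith
  calc (z₂ - z₁) * B * C = (z₂ - z₁) * (B * C) := by ring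
  _ < (z₂ - z₁) * A := by exact mul_lt_mul_of_pos_left hAgt hz
  _ = B - C := hdiff.symm
end

section
/- Let ν be a probability measure with support bounded above by B = max{0, sup supp(ν)}, and with finite first moment m₀ = ∫ x dν(x). For m in the domain of means, let Q_m(dx) = V(m)·ν(dx)/(V(m) + m(m-x)) where V denotes the pseudo-variance, and suppose Q_m is a probability measure with mean m. Then the variance ∫(x-m)² Q_m(dx) equals ((m - m₀)/m)·V(m) whenever m ≠ 0. -/
open MeasureTheory Real Set Filter
open scoped NNReal ENNReal

/-- If ν has finite first moment m₀ and Q_m is the member of the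
CSK family with density V(m)/(V(m)+m(m-x)) with respect to ν, having mean m,
then the variance of Q_m equals ((m-m₀)/m)·V(m) for m ≠ 0. -/
theorem stmt8 (ν : Measure ℝ) [IsProbabilityMeasure ν] (B : ℝ)
    (hB : 0 ≤ B) (hsupp : ∀ᵐ x ∂ν, x ≤ B)
    (m₀ m V : ℝ) (hint0 : Integrable (fun x => x) ν)
    (hm₀ : m₀ = ∫ x, x ∂ν) (hm : m ≠ 0)
    (hpos : ∀ᵐ x ∂ν, 0 < V + m * (m - x))
    (Q : Measure ℝ)
    (hQ : Q = ν.withDensity (fun x => ENNReal.ofReal (V / (V + m * (m - x)))))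
    (hQprob : IsProbabilityMeasure Q)
    (hmean : ∫ x, x ∂Q = m)
    (hint : Integrable (fun x => x * (x - m)) Q) :
    ∫ x, (x - m) ^ 2 ∂Q = ((m - m₀) / m) * V := by
  -- the density as an ℝ≥0-valued function
  set f : ℝ → ℝ≥0 := fun x => (V / (V + m * (m - x))).toNNReal with hf
  have hmeas : Measurable f := by
    apply Measurable.real_toNNReal
    fun_prop
  have hQ' : Q = ν.withDensity (fun x => (f x : ℝ≥0∞)) := hQ
  -- V is positive
  have hV : 0 < V := by
    by_contra hV
    push_neg at hV
    have hzero : (fun x => (f x : ℝ≥0∞)) =ᵐ[ν] 0 := by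
      filter_upwards [hpos] with x hx
      have : V / (V + m * (m - x)) ≤ 0 := div_nonpos_of_nonpos_of_nonneg hV hx.le
      simp [hf, Real.toNNReal_of_nonpos this]
    have : Q = 0 := by
      rw [hQ', withDensity_congr_ae hzero, withDensity_zero]
    have h1 : Q univ = 1 := hQprob.measure_univ
    rw [this] at h1
    simp at h1
  -- pointwise value of the density (as a real)
  have hfval : ∀ᵐ x ∂ν, (f x : ℝ) = V / (V + m * (m - x)) := by
    filter_upwards [hpos] with x hx
    exact Real.coe_toNNReal _ (div_pos hV hx).le
  -- x is integrable w.r.t. Q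
  have hintx : Integrable (fun x => x) Q := by
    by_contra h
    rw [integral_undef h] at hmean
    exact hm hmean.symm
  have hintx' : Integrable (fun x => f x • x) ν := by
    rw [hQ', integrable_withDensity_iff_integrable_smul hmeas] at hintx
    exact hintx
  -- the key identity: ∫ x(x-m) dQ = (V/m)(m - m₀)
  have hmeanν : ∫ x, f x • x ∂ν = m := by
    rw [← hmean, hQ', integral_withDensity_eq_integral_smul hmeas]
  have hkey : ∫ x, x * (x - m) ∂Q = V / m * m - V / m * m₀ := by
    rw [hQ', integral_withDensity_eq_integral_smul hmeas]
    have hptwise : (fun x => f x • (x * (x - m))) =ᵐ[ν]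
        (fun x => V / m * (f x • x) - V / m * x) := by
      filter_upwards [hpos, hfval] with x hx hfx
      have hD : V + m * (m - x) ≠ 0 := hx.ne'
      simp only [NNReal.smul_def, smul_eq_mul, hfx]
      field_simp [hD]
      ring
    rw [integral_congr_ae hptwise, integral_sub (hintx'.const_mul _) (hint0.const_mul _),
      integral_const_mul, integral_const_mul, hmeanν, ← hm₀]
  -- expand the square
  have hsq : (fun x : ℝ => (x - m) ^ 2) =
      fun x => x * (x - m) - m * x + m * m := by
    funext x; ring
  have hintc : Integrable (fun _ : ℝ => m * m) Q := integrable_const _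
  have h1 : Integrable (fun x => x * (x - m) - m * x) Q := hint.sub (hintx.const_mul m)
  rw [hsq, integral_add h1 hintc,
    integral_sub hint (hintx.const_mul m), integral_const_mul, hmean,
    integral_const, probReal_univ, hkey]
  field_simp
  ring
end

section
/- For p > 0, the function f(x) = p√(-p² - 4x)/(2πx²) on (-∞, -p²/4) (and 0 elsewhere) is a probability density, and its Cauchy transform is G(z) = (p² + 2z - p√(4z + p²))/(2z²) for z > -p²/4. -/
open MeasureTheory Real Set Filter Topology

lemma keyFTC {g g' : ℝ → ℝ} {a m : ℝ}
    (hcont : ContinuousWithinAt g (Iic a) a)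
    (hderiv : ∀ x ∈ Iio a, HasDerivAt g (g' x) x)
    (g'nonneg : ∀ x ∈ Iio a, 0 ≤ g' x)
    (hbot : Tendsto g atBot (𝓝 m)) :
    IntegrableOn g' (Iio a) ∧ ∫ x in Iio a, g' x = g a - m := by
  have A : MeasurableEmbedding (fun x : ℝ => -x) :=
    (Homeomorph.neg ℝ).isClosedEmbedding.measurableEmbedding
  -- reflected function
  have hGderiv : ∀ y ∈ Ioi (-a), HasDerivAt (fun y => -g (-y)) (g' (-y)) y := by
    intro y hy
    have h1 : HasDerivAt (fun y : ℝ => -y) (-1) y := (hasDerivAt_id y).neg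
    have h2 := ((hderiv (-y) (by simp only [mem_Iio]; linarith [hy.out])).comp y h1).neg
    simpa [Function.comp_def, Pi.neg_def] using h2
  have hGcont : ContinuousWithinAt (fun y => -g (-y)) (Ici (-a)) (-a) := by
    have : MapsTo (fun y : ℝ => -y) (Ici (-a)) (Iic a) := fun y hy => by
      simpa using neg_le_neg hy.out
    have h2 : ContinuousWithinAt g (Iic a) (-(-a)) := by rw [neg_neg]; exact hcont
    exact (ContinuousWithinAt.comp h2 (continuous_neg.continuousWithinAt) this).neg
  have hGtop : Tendsto (fun y => -g (-y)) atTop (𝓝 (-m)) :=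
    (hbot.comp tendsto_neg_atTop_atBot).neg
  have hInt : IntegrableOn (fun y => g' (-y)) (Ioi (-a)) :=
    integrableOn_Ioi_deriv_of_nonneg hGcont hGderiv
      (fun y hy => g'nonneg (-y) (by simp only [mem_Iio]; linarith [hy.out])) hGtop
  have hmap : volume.restrict (Ioi (-a))
      = Measure.map (fun x : ℝ => -x) (volume.restrict (Iio a)) := by
    rw [show volume.restrict (Ioi (-a))
        = ((volume : Measure ℝ).map (fun x : ℝ => -x)).restrict (Ioi (-a)) by
          rw [Measure.map_neg_eq_self],
      Measure.restrict_map A.measurable measurableSet_Ioi]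
    congr 1
    ext x; simp
  have hInt2 : IntegrableOn g' (Iio a) := by
    have := hInt
    rw [IntegrableOn, hmap, A.integrable_map_iff] at this
    have hfe : ((fun y => g' (-y)) ∘ fun x : ℝ => -x) = g' := by
      ext x; simp
    rwa [hfe] at this
  refine ⟨hInt2, ?_⟩
  have hIic : IntegrableOn g' (Iic a) := by
    rwa [IntegrableOn, ← Measure.restrict_congr_set Iio_ae_eq_Iic]
  have := integral_Iic_of_hasDerivAt_of_tendsto hcont hderiv hIic hbot
  rwa [← setIntegral_congr_set Iio_ae_eq_Iic] at this

lemma sqrtAtTop : Tendsto Real.sqrt atTop atTop := by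
  apply tendsto_atTop.2
  intro b
  filter_upwards [eventually_ge_atTop (b^2 ⊔ 0)] with x hx
  calc b ≤ |b| := le_abs_self b
    _ = Real.sqrt (b^2) := (Real.sqrt_sq_eq_abs b).symm
    _ ≤ Real.sqrt x := Real.sqrt_le_sqrt (le_trans (le_max_left _ _) hx)

lemma innerTendsto (p : ℝ) : Tendsto (fun x : ℝ => -p^2-4*x) atBot atTop := by
  apply tendsto_atTop.2
  intro b
  filter_upwards [eventually_le_atBot ((-p^2-b)/4)] with x hx
  nlinarith

lemma sqrtTendsto (p : ℝ) : Tendsto (fun x => Real.sqrt (-p^2-4*x)) atBot atTop :=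
  sqrtAtTop.comp (innerTendsto p)

lemma arctanTendsto (p c : ℝ) (hc : 0 < c) :
    Tendsto (fun x => Real.arctan (Real.sqrt (-p^2-4*x)/c)) atBot (𝓝 (π/2)) :=
  (tendsto_nhds_of_tendsto_nhdsWithin Real.tendsto_arctan_atTop).comp
    ((sqrtTendsto p).atTop_div_const hc)

lemma invAtBot : Tendsto (fun x : ℝ => x⁻¹) atBot (𝓝 0) := by
  have := ((tendsto_inv_atTop_zero (𝕜 := ℝ)).comp tendsto_neg_atBot_atTop).neg
  simp only [Function.comp_def, inv_neg, neg_neg, neg_zero] at this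
  exact this

lemma ratioTendsto (p : ℝ) : Tendsto (fun x => Real.sqrt (-p^2-4*x)/x) atBot (𝓝 0) := by
  have h1 : Tendsto (fun x : ℝ => -p^2*(x⁻¹)^2 - 4*x⁻¹) atBot (𝓝 0) := by
    have := ((invAtBot.pow 2).const_mul (-p^2)).sub (invAtBot.const_mul 4)
    simpa using this
  have h2 : Tendsto (fun x : ℝ => -(Real.sqrt (-p^2*(x⁻¹)^2 - 4*x⁻¹))) atBot (𝓝 0) := by
    have := (Real.continuous_sqrt.continuousAt (x := (0:ℝ))).tendsto.comp h1
    simpa using this.neg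
  apply h2.congr'
  filter_upwards [eventually_le_atBot (min (-p^2/4) (-1))] with x hx
  have hx1 : x ≤ -p^2/4 := hx.trans (min_le_left _ _)
  have hx0 : x < 0 := lt_of_le_of_lt (hx.trans (min_le_right _ _)) (by norm_num)
  have hxne : x ≠ 0 := hx0.ne
  have hnum : (0:ℝ) ≤ -p^2-4*x := by nlinarith
  have heq : -p^2*(x⁻¹)^2 - 4*x⁻¹ = (-p^2-4*x)/x^2 := by field_simp
  rw [heq, Real.sqrt_div hnum, Real.sqrt_sq_eq_abs, abs_of_neg hx0]
  field_simp

lemma hasDerivAtSqrt (p x : ℝ) (hpos : 0 < -p^2-4*x) :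
    HasDerivAt (fun x => Real.sqrt (-p^2-4*x)) (-2 / Real.sqrt (-p^2-4*x)) x := by
  have h1 : HasDerivAt (fun x : ℝ => -p^2-4*x) (-4) x := by
    simpa [Pi.sub_def] using (hasDerivAt_const x (-p^2)).sub ((hasDerivAt_id x).const_mul 4)
  have h2 := (Real.hasDerivAt_sqrt hpos.ne').comp x h1
  have hs : Real.sqrt (-p^2-4*x) ≠ 0 := (Real.sqrt_pos.2 hpos).ne'
  convert h2 using 1 <;> try exact rfl
  field_simp
  ring

lemma part1 (p : ℝ) (hp : 0 < p) :
    (∫ x : ℝ, (if x < -p ^ 2 / 4 then p * Real.sqrt (-p ^ 2 - 4 * x) / (2 * π * x ^ 2) else 0)) = 1 := by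
  have hp2 : (0:ℝ) < p^2 := by positivity
  have ha0 : -p^2/4 < 0 := by nlinarith
  have hπ : (0:ℝ) < π := Real.pi_pos
  set f : ℝ → ℝ := fun x => p * Real.sqrt (-p ^ 2 - 4 * x) / (2 * π * x ^ 2) with hf
  set F : ℝ → ℝ := fun x => -(2/π) * (Real.arctan (Real.sqrt (-p^2-4*x)/p)
      + p * Real.sqrt (-p^2-4*x)/(4*x)) with hF
  have hstep : (∫ x : ℝ, (if x < -p^2/4 then f x else 0)) = ∫ x in Iio (-p^2/4), f x := by
    have he : (fun x => if x < -p^2/4 then f x else 0) = (Iio (-p^2/4)).indicator f := by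
      ext x
      simp [indicator_apply]
    rw [he, integral_indicator measurableSet_Iio]
  -- continuity at the endpoint
  have hsc : ContinuousAt (fun x => Real.sqrt (-p^2-4*x)) (-p^2/4) :=
    (Real.continuous_sqrt.comp (by continuity)).continuousAt
  have hcont : ContinuousWithinAt F (Iic (-p^2/4)) (-p^2/4) := by
    apply ContinuousAt.continuousWithinAt
    apply ContinuousAt.mul continuousAt_const
    apply ContinuousAt.add
    · exact Real.continuous_arctan.continuousAt.comp (hsc.div_const p)
    · exact (hsc.const_mul p).div ((continuous_const.mul continuous_id).continuousAt)
        (ne_of_lt (by nlinarith))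
  -- derivative
  have hderiv : ∀ x ∈ Iio (-p^2/4), HasDerivAt F (f x) x := by
    intro x hx
    have hxa : x < -p^2/4 := hx
    have hx0 : x < 0 := hxa.trans ha0
    have hxne : x ≠ 0 := hx0.ne
    have hpos : (0:ℝ) < -p^2-4*x := by nlinarith
    have hs := hasDerivAtSqrt p x hpos
    have hs0 : 0 < Real.sqrt (-p^2-4*x) := Real.sqrt_pos.2 hpos
    have harc : HasDerivAt (fun x => Real.arctan (Real.sqrt (-p^2-4*x)/p))
        (1/(1+(Real.sqrt (-p^2-4*x)/p)^2) * ((-2 / Real.sqrt (-p^2-4*x))/p)) x :=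
      (Real.hasDerivAt_arctan _).comp x (hs.div_const p)
    have h4x : HasDerivAt (fun x : ℝ => 4*x) 4 x := by
      simpa using (hasDerivAt_id x).const_mul 4
    have hterm2 : HasDerivAt (fun x => p * Real.sqrt (-p^2-4*x)/(4*x))
        (((p * (-2 / Real.sqrt (-p^2-4*x))) * (4*x) - (p * Real.sqrt (-p^2-4*x)) * 4)/(4*x)^2) x :=
      (hs.const_mul p).div h4x (by simpa using hxne)
    have hsum := (harc.add hterm2).const_mul (-(2/π))
    convert hsum using 1 <;> try exact rfl
    have hs2 : Real.sqrt (-p^2-4*x)^2 = -p^2-4*x := Real.sq_sqrt hpos.le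
    set s := Real.sqrt (-p^2-4*x) with hsdef
    have hx2 : x = (-p^2 - s^2)/4 := by rw [hs2]; ring
    rw [hf]
    simp only
    rw [hx2]
    have hps : p^2+s^2 ≠ 0 := by positivity
    have h1 : (1:ℝ)+(s/p)^2 ≠ 0 := by positivity
    field_simp
    rw [show (-p^2 - s^2) = -(p^2+s^2) by ring, neg_sq]
    field_simp
    ring_nf
    rw [Real.sqrt_sq hs0.le]
    ring
  -- nonnegativity
  have hnn : ∀ x ∈ Iio (-p^2/4), 0 ≤ f x := by
    intro x hx
    have : (0:ℝ) ≤ p * Real.sqrt (-p^2-4*x) := by positivity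
    exact div_nonneg this (by positivity)
  -- limit at -infty
  have hbot : Tendsto F atBot (𝓝 (-1)) := by
    have h1 := arctanTendsto p p hp
    have h2 : Tendsto (fun x => p * Real.sqrt (-p^2-4*x)/(4*x)) atBot (𝓝 0) := by
      have := (ratioTendsto p).const_mul (p/4)
      rw [mul_zero] at this
      apply this.congr
      intro x
      exact div_mul_div_comm p 4 _ x
    have := (h1.add h2).const_mul (-(2/π))
    rw [add_zero] at this
    have hval : -(2/π) * (π/2) = -1 := by
      rw [neg_mul, div_mul_div_comm, mul_comm (2:ℝ) π, div_self (by positivity : π*2 ≠ 0)]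
    rw [hval] at this
    exact this
  obtain ⟨-, hint⟩ := keyFTC hcont hderiv hnn hbot
  rw [hstep, hint]
  have hz : -p^2 - 4*(-p^2/4) = 0 := by ring
  rw [hF]
  simp only [hz, Real.sqrt_zero, zero_div, Real.arctan_zero, mul_zero, zero_add, add_zero,
    zero_mul, mul_zero]
  norm_num

lemma part2 (p : ℝ) (hp : 0 < p) (z : ℝ) (hz1 : -p ^ 2 / 4 < z) (hz0 : z ≠ 0) :
    (∫ x : ℝ, (if x < -p ^ 2 / 4 then p * Real.sqrt (-p ^ 2 - 4 * x) / (2 * π * x ^ 2) else 0) / (z - x))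
      = (p ^ 2 + 2 * z - p * Real.sqrt (4 * z + p ^ 2)) / (2 * z ^ 2) := by
  have hp2 : (0:ℝ) < p^2 := by positivity
  have ha0 : -p^2/4 < 0 := by nlinarith
  have hπ : (0:ℝ) < π := Real.pi_pos
  have hb4 : (0:ℝ) < 4*z+p^2 := by nlinarith
  set b : ℝ := Real.sqrt (4*z+p^2) with hbdef
  have hb0 : 0 < b := Real.sqrt_pos.2 hb4
  have hb2 : b^2 = 4*z+p^2 := Real.sq_sqrt hb4.le
  set g : ℝ → ℝ := fun x => (p * Real.sqrt (-p ^ 2 - 4 * x) / (2 * π * x ^ 2)) / (z - x) with hg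
  set F : ℝ → ℝ := fun x => (p/(2*π)) * ((2*b/z^2) * Real.arctan (Real.sqrt (-p^2-4*x)/b)
      - (2*p/z^2+4/(p*z)) * Real.arctan (Real.sqrt (-p^2-4*x)/p)
      - Real.sqrt (-p^2-4*x)/(z*x)) with hF
  have hstep : (∫ x : ℝ, (if x < -p ^ 2 / 4 then p * Real.sqrt (-p ^ 2 - 4 * x) / (2 * π * x ^ 2) else 0) / (z - x))
      = ∫ x in Iio (-p^2/4), g x := by
    have he : (fun x => (if x < -p ^ 2 / 4 then p * Real.sqrt (-p ^ 2 - 4 * x) / (2 * π * x ^ 2) else 0) / (z - x))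
        = (Iio (-p^2/4)).indicator g := by
      ext x
      by_cases h : x < -p^2/4 <;> simp [indicator_apply, h, hg]
    rw [he, integral_indicator measurableSet_Iio]
  have hsc : ContinuousAt (fun x => Real.sqrt (-p^2-4*x)) (-p^2/4) :=
    (Real.continuous_sqrt.comp (by continuity)).continuousAt
  have hcont : ContinuousWithinAt F (Iic (-p^2/4)) (-p^2/4) := by
    apply ContinuousAt.continuousWithinAt
    apply ContinuousAt.mul continuousAt_const
    apply ContinuousAt.sub
    apply ContinuousAt.sub
    · exact (Real.continuous_arctan.continuousAt.comp (hsc.div_const b)).const_mul _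
    · exact (Real.continuous_arctan.continuousAt.comp (hsc.div_const p)).const_mul _
    · exact hsc.div ((continuous_const.mul continuous_id).continuousAt)
        (mul_ne_zero hz0 (ne_of_lt ha0))
  have hderiv : ∀ x ∈ Iio (-p^2/4), HasDerivAt F (g x) x := by
    intro x hx
    have hxa : x < -p^2/4 := hx
    have hx0 : x < 0 := hxa.trans ha0
    have hxne : x ≠ 0 := hx0.ne
    have hxz : x < z := hxa.trans hz1
    have hpos : (0:ℝ) < -p^2-4*x := by nlinarith
    have hs := hasDerivAtSqrt p x hpos
    have hs0 : 0 < Real.sqrt (-p^2-4*x) := Real.sqrt_pos.2 hpos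
    have harcb : HasDerivAt (fun x => Real.arctan (Real.sqrt (-p^2-4*x)/b))
        (1/(1+(Real.sqrt (-p^2-4*x)/b)^2) * ((-2 / Real.sqrt (-p^2-4*x))/b)) x :=
      (Real.hasDerivAt_arctan _).comp x (hs.div_const b)
    have harcp : HasDerivAt (fun x => Real.arctan (Real.sqrt (-p^2-4*x)/p))
        (1/(1+(Real.sqrt (-p^2-4*x)/p)^2) * ((-2 / Real.sqrt (-p^2-4*x))/p)) x :=
      (Real.hasDerivAt_arctan _).comp x (hs.div_const p)
    have hzx : HasDerivAt (fun x : ℝ => z*x) z x := by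
      simpa using (hasDerivAt_id x).const_mul z
    have hdiv : HasDerivAt (fun x => Real.sqrt (-p^2-4*x)/(z*x))
        (((-2 / Real.sqrt (-p^2-4*x))*(z*x) - Real.sqrt (-p^2-4*x)*z)/(z*x)^2) x :=
      hs.div hzx (mul_ne_zero hz0 hxne)
    have hsum := (((harcb.const_mul (2*b/z^2)).sub
      (harcp.const_mul (2*p/z^2+4/(p*z)))).sub hdiv).const_mul (p/(2*π))
    convert hsum using 1 <;> try exact rfl
    have hs2 : Real.sqrt (-p^2-4*x)^2 = -p^2-4*x := Real.sq_sqrt hpos.le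
    set s := Real.sqrt (-p^2-4*x) with hsdef
    rw [hg]
    simp only
    have hzxne : z - x ≠ 0 := sub_ne_zero.2 hxz.ne'
    have h1p : 1+(s/p)^2 = (-4*x)/p^2 := by
      field_simp
      linear_combination hs2
    have h1b : 1+(s/b)^2 = (4*(z-x))/b^2 := by
      field_simp
      linear_combination hs2 + hb2
    rw [h1p, h1b]
    have e2 : (2*b/z^2)*(1/((4*(z-x))/b^2)*((-2/s)/b)) = -(b^2)/(z^2*s*(z-x)) := by
      field_simp
      ring
    have e1 : (2*p/z^2+4/(p*z))*(1/((-4*x)/p^2)*((-2/s)/p)) = (p^2+2*z)/(z^2*x*s) := by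
      field_simp
      ring
    have e3 : ((-2/s)*(z*x) - s*z)/(z*x)^2 = (-2*x-s^2)/(z*x^2*s) := by
      field_simp
    rw [e2, e1, e3, hb2]
    rw [← hsdef]
    field_simp
    linear_combination (x*z) * hs2
  have hnn : ∀ x ∈ Iio (-p^2/4), 0 ≤ g x := by
    intro x hx
    have hxa : x < -p^2/4 := hx
    have hxz : x < z := hxa.trans hz1
    have h1 : (0:ℝ) ≤ p * Real.sqrt (-p^2-4*x) := by positivity
    exact div_nonneg (div_nonneg h1 (by positivity)) (by linarith)
  set m : ℝ := (p/(2*π)) * ((2*b/z^2)*(π/2) - (2*p/z^2+4/(p*z))*(π/2) - 0) with hm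
  have hbot : Tendsto F atBot (𝓝 m) := by
    have harcb := arctanTendsto p b hb0
    have harcp := arctanTendsto p p hp
    have hlast : Tendsto (fun x => Real.sqrt (-p^2-4*x)/(z*x)) atBot (𝓝 0) := by
      have := (ratioTendsto p).const_mul (1/z)
      rw [mul_zero] at this
      apply this.congr
      intro x
      rw [div_mul_div_comm, one_mul]
    exact (((harcb.const_mul (2*b/z^2)).sub
      (harcp.const_mul (2*p/z^2+4/(p*z)))).sub hlast).const_mul (p/(2*π))
  obtain ⟨-, hint⟩ := keyFTC hcont hderiv hnn hbot
  rw [hstep, hint]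
  have hz : -p^2 - 4*(-p^2/4) = 0 := by ring
  rw [hF, hm]
  simp only [hz, Real.sqrt_zero, zero_div, Real.arctan_zero, mul_zero, zero_sub, sub_zero,
    zero_mul, neg_zero, zero_add, sub_self]
  field_simp
  ring

/-- For p > 0, f(x) = p√(-p²-4x)/(2πx²) on (-∞,-p²/4) is a
probability density, whose Cauchy transform is
G(z) = (p²+2z-p√(4z+p²))/(2z²) for real z > -p²/4 (z ≠ 0, where the closed
formula's denominator vanishes). -/
theorem stmt13 (p : ℝ) (hp : 0 < p) :
    (∫ x : ℝ, (if x < -p ^ 2 / 4 then p * Real.sqrt (-p ^ 2 - 4 * x) / (2 * π * x ^ 2) else 0)) = 1 ∧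
    ∀ z : ℝ, -p ^ 2 / 4 < z → z ≠ 0 →
      (∫ x : ℝ, (if x < -p ^ 2 / 4 then p * Real.sqrt (-p ^ 2 - 4 * x) / (2 * π * x ^ 2) else 0) / (z - x))
        = (p ^ 2 + 2 * z - p * Real.sqrt (4 * z + p ^ 2)) / (2 * z ^ 2) :=
  ⟨part1 p hp, fun z hz1 hz0 => part2 p hp z hz1 hz0⟩
end

section
/- For p > 0, the inverse semicircle law ν with density p√(-p²-4x)/(2πx²) on (-∞, -p²/4) has R-transform 𝓡_ν(z) = -p/√z for z > 0; i.e., K(z) := 𝓡_ν(z) + 1/z = -p/√z + 1/z satisfies G(K(z)) = z for 0 < z < G(-p²/4), where G(z) = (p² + 2z - p√(4z+p²))/(2z²). -/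
open Real

/-- For the inverse semicircle law with Cauchy transform
G(t) = (p²+2t-p√(4t+p²))/(2t²) (with G(0) = 1/p², the removable-singularity
value), the function K(z) = 𝓡(z) + 1/z = 1/z - p/√z satisfies G(K(z)) = z
for 0 < z < G(-p²/4); i.e. the R-transform is 𝓡(z) = -p/√z. -/
theorem stmt14 (p : ℝ) (hp : 0 < p) (G : ℝ → ℝ)
    (hG : ∀ t : ℝ, t ≠ 0 →
      G t = (p ^ 2 + 2 * t - p * Real.sqrt (4 * t + p ^ 2)) / (2 * t ^ 2))
    (hG0 : G 0 = 1 / p ^ 2)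
    (z : ℝ) (hz : 0 < z) (hz2 : z < G (-p ^ 2 / 4)) :
    G (1 / z - p / Real.sqrt z) = z := by
  have hne : (-p ^ 2 / 4 : ℝ) ≠ 0 := by
    have : (0:ℝ) < p ^ 2 := by positivity
    intro h; nlinarith
  have hGm : G (-p ^ 2 / 4) = 4 / p ^ 2 := by
    rw [hG _ hne]
    have h0 : 4 * (-p ^ 2 / 4) + p ^ 2 = 0 := by ring
    rw [h0, Real.sqrt_zero]
    have hp2 : p ^ 2 ≠ 0 := by positivity
    field_simp
    ring
  rw [hGm] at hz2
  set s := Real.sqrt z with hsdef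
  have hs : 0 < s := Real.sqrt_pos.mpr hz
  have hsz : s ^ 2 = z := Real.sq_sqrt hz.le
  have h4p : z * p ^ 2 < 4 := (lt_div_iff₀ (by positivity)).mp hz2
  have hps : p * s < 2 := by nlinarith [mul_pos hp hs, sq_nonneg (p * s - 2)]
  by_cases h1 : p * s = 1
  · have hK0 : 1 / z - p / s = 0 := by
      rw [← hsz]; field_simp; nlinarith
    rw [hK0, hG0, ← hsz]
    have : s = 1 / p := by field_simp; linarith [h1]
    rw [this]; field_simp
  · have hK : 1 / z - p / s ≠ 0 := by
      rw [← hsz]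
      intro h
      apply h1
      have hs2 : s ^ 2 ≠ 0 := by positivity
      field_simp at h
      nlinarith
    rw [hG _ hK]
    have h4 : 4 * (1 / z - p / s) + p ^ 2 = ((2 - p * s) / s) ^ 2 := by
      rw [← hsz]; field_simp; ring
    rw [h4, Real.sqrt_sq (div_nonneg (by linarith) hs.le)]
    rw [← hsz] at hK ⊢
    have hKs : 1 / s ^ 2 - p / s = (1 - p * s) / s ^ 2 := by field_simp
    have h1' : 1 - p * s ≠ 0 := by intro h; apply h1; linarith
    rw [hKs]
    rw [div_eq_iff (mul_ne_zero two_ne_zero (pow_ne_zero 2 (div_ne_zero h1' (by positivity))))]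
    field_simp
    ring
end

section
/- Let ν be a non-degenerate probability measure with support bounded above by b, G its Cauchy transform, and K the compositional inverse of G on (0, G(b)) (so G(K(x)) = x). Then the R-transform 𝓡(x) = K(x) - 1/x is strictly increasing on (0, G(b)). -/
open MeasureTheory Real Set Filter

lemma aux_integrable (ν : Measure ℝ) [IsProbabilityMeasure ν] {b z : ℝ}
    (hsupp : ∀ᵐ x ∂ν, x ≤ b) (hz : b < z) :
    Integrable (fun x => 1 / (z - x)) ν := by
  refine Integrable.mono' (integrable_const (1 / (z - b))) ?_ ?_
  · have hm : Measurable fun x : ℝ => 1 / (z - x) := by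
      simp only [one_div]
      exact (measurable_const.sub measurable_id).inv
    exact hm.aestronglyMeasurable
  · filter_upwards [hsupp] with x hx
    have h1 : (0:ℝ) < z - x := by linarith
    rw [Real.norm_eq_abs, abs_of_pos (one_div_pos.mpr h1)]
    exact one_div_le_one_div_of_le (by linarith) (by linarith)

lemma aux_integrable2 (ν : Measure ℝ) [IsProbabilityMeasure ν] {b u v : ℝ}
    (hsupp : ∀ᵐ x ∂ν, x ≤ b) (hu : b < u) (hv : b < v) :
    Integrable (fun x => (1 / (u - x)) * (1 / (v - x))) ν := by
  refine Integrable.mono' (integrable_const ((1 / (u - b)) * (1 / (v - b)))) ?_ ?_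
  · have hm : Measurable fun x : ℝ => (1 / (u - x)) * (1 / (v - x)) := by
      simp only [one_div]
      exact ((measurable_const.sub measurable_id).inv).mul
        ((measurable_const.sub measurable_id).inv)
    exact hm.aestronglyMeasurable
  · filter_upwards [hsupp] with x hx
    have h1 : (0:ℝ) < u - x := by linarith
    have h2 : (0:ℝ) < v - x := by linarith
    rw [Real.norm_eq_abs, abs_of_pos (mul_pos (one_div_pos.mpr h1) (one_div_pos.mpr h2))]
    exact mul_le_mul (one_div_le_one_div_of_le (by linarith) (by linarith))
      (one_div_le_one_div_of_le (by linarith) (by linarith))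
      (one_div_pos.mpr h2).le (one_div_pos.mpr (by linarith : (0:ℝ) < u - b)).le

/-- Strict Chebyshev / covariance inequality for the resolvent kernels. -/
lemma aux_key (ν : Measure ℝ) [IsProbabilityMeasure ν]
    (hnd : ∀ c : ℝ, ν ≠ Measure.dirac c) {b u v : ℝ}
    (hsupp : ∀ᵐ x ∂ν, x ≤ b) (hu : b < u) (huv : u < v) :
    (∫ x, 1 / (u - x) ∂ν) * (∫ x, 1 / (v - x) ∂ν)
      < ∫ x, (1 / (u - x)) * (1 / (v - x)) ∂ν := by
  have hv : b < v := lt_trans hu huv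
  set f : ℝ → ℝ := fun x => 1 / (u - x) with hf
  set g : ℝ → ℝ := fun x => 1 / (v - x) with hg
  have hfi : Integrable f ν := aux_integrable ν hsupp hu
  have hgi : Integrable g ν := aux_integrable ν hsupp hv
  have hfgi : Integrable (fun x => f x * g x) ν := aux_integrable2 ν hsupp hu hv
  set μ : Measure (ℝ × ℝ) := ν.prod ν with hμ
  have hsp1 : ∀ᵐ p ∂μ, p.1 ≤ b := by
    rw [ae_iff]
    have hset : {p : ℝ × ℝ | ¬ p.1 ≤ b} = {x : ℝ | ¬ x ≤ b} ×ˢ (univ : Set ℝ) := by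
      ext p; simp [Set.mem_prod]
    rw [hμ, hset, Measure.prod_prod, measure_univ, mul_one]
    exact ae_iff.mp hsupp
  have hsp2 : ∀ᵐ p ∂μ, p.2 ≤ b := by
    rw [ae_iff]
    have hset : {p : ℝ × ℝ | ¬ p.2 ≤ b} = (univ : Set ℝ) ×ˢ {x : ℝ | ¬ x ≤ b} := by
      ext p; simp [Set.mem_prod]
    rw [hμ, hset, Measure.prod_prod, measure_univ, one_mul]
    exact ae_iff.mp hsupp
  set F : ℝ × ℝ → ℝ := fun p => (f p.1 - f p.2) * (g p.1 - g p.2) with hF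
  -- integrability of all pieces
  have i1 : Integrable (fun p : ℝ × ℝ => (f p.1 * g p.1) * (1 : ℝ)) μ :=
    hfgi.mul_prod (integrable_const (1:ℝ))
  have i2 : Integrable (fun p : ℝ × ℝ => f p.1 * g p.2) μ := hfi.mul_prod hgi
  have i3 : Integrable (fun p : ℝ × ℝ => g p.1 * f p.2) μ := hgi.mul_prod hfi
  have i4 : Integrable (fun p : ℝ × ℝ => (1 : ℝ) * (f p.2 * g p.2)) μ :=
    (integrable_const (1:ℝ)).mul_prod hfgi
  have i12 : Integrable (fun p : ℝ × ℝ => (f p.1 * g p.1) * 1 - f p.1 * g p.2) μ := i1.sub i2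
  have i123 : Integrable
      (fun p : ℝ × ℝ => (f p.1 * g p.1) * 1 - f p.1 * g p.2 - g p.1 * f p.2) μ := i12.sub i3
  have i1234 : Integrable
      (fun p : ℝ × ℝ => (f p.1 * g p.1) * 1 - f p.1 * g p.2 - g p.1 * f p.2
        + 1 * (f p.2 * g p.2)) μ := i123.add i4
  have hFeq : ∀ p : ℝ × ℝ, F p =
      (f p.1 * g p.1) * 1 - f p.1 * g p.2 - g p.1 * f p.2 + 1 * (f p.2 * g p.2) := by
    intro p; simp only [hF, hf, hg]; ring
  have hFi : Integrable F μ :=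
    i1234.congr (by filter_upwards with p using (hFeq p).symm)
  -- value of the integral of F
  have e12 : ∫ p : ℝ × ℝ, ((f p.1 * g p.1) * 1 - f p.1 * g p.2) ∂μ
      = (∫ p : ℝ × ℝ, (f p.1 * g p.1) * 1 ∂μ) - ∫ p : ℝ × ℝ, f p.1 * g p.2 ∂μ :=
    integral_sub i1 i2
  have e123 : ∫ p : ℝ × ℝ, ((f p.1 * g p.1) * 1 - f p.1 * g p.2 - g p.1 * f p.2) ∂μ
      = (∫ p : ℝ × ℝ, ((f p.1 * g p.1) * 1 - f p.1 * g p.2) ∂μ)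
        - ∫ p : ℝ × ℝ, g p.1 * f p.2 ∂μ :=
    integral_sub i12 i3
  have e1234 : ∫ p : ℝ × ℝ, ((f p.1 * g p.1) * 1 - f p.1 * g p.2 - g p.1 * f p.2
        + 1 * (f p.2 * g p.2)) ∂μ
      = (∫ p : ℝ × ℝ, ((f p.1 * g p.1) * 1 - f p.1 * g p.2 - g p.1 * f p.2) ∂μ)
        + ∫ p : ℝ × ℝ, (1 : ℝ) * (f p.2 * g p.2) ∂μ :=
    integral_add i123 i4
  have p1 : ∫ p : ℝ × ℝ, (f p.1 * g p.1) * (1:ℝ) ∂μ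
      = (∫ x, f x * g x ∂ν) * (∫ _, (1:ℝ) ∂ν) :=
    integral_prod_mul (fun x => f x * g x) (fun _ => (1:ℝ))
  have p2 : ∫ p : ℝ × ℝ, f p.1 * g p.2 ∂μ = (∫ x, f x ∂ν) * (∫ x, g x ∂ν) :=
    integral_prod_mul f g
  have p3 : ∫ p : ℝ × ℝ, g p.1 * f p.2 ∂μ = (∫ x, g x ∂ν) * (∫ x, f x ∂ν) :=
    integral_prod_mul g f
  have p4 : ∫ p : ℝ × ℝ, (1:ℝ) * (f p.2 * g p.2) ∂μ
      = (∫ _, (1:ℝ) ∂ν) * (∫ x, f x * g x ∂ν) :=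
    integral_prod_mul (fun _ => (1:ℝ)) (fun x => f x * g x)
  have hone : (∫ _, (1:ℝ) ∂ν) = 1 := by simp
  have hFval : ∫ p, F p ∂μ =
      2 * ((∫ x, f x * g x ∂ν) - (∫ x, f x ∂ν) * (∫ x, g x ∂ν)) := by
    rw [integral_congr_ae (ae_of_all μ hFeq), e1234, e123, e12, p1, p2, p3, p4, hone]
    ring
  -- F is a.e. nonneg
  have hFnn : 0 ≤ᵐ[μ] F := by
    filter_upwards [hsp1, hsp2] with p h1 h2
    simp only [Pi.zero_apply, hF]
    rcases le_total p.1 p.2 with h | h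
    · have hf' : f p.1 ≤ f p.2 :=
        one_div_le_one_div_of_le (by linarith) (by linarith)
      have hg' : g p.1 ≤ g p.2 :=
        one_div_le_one_div_of_le (by linarith) (by linarith)
      nlinarith [mul_nonneg (sub_nonneg.mpr hf') (sub_nonneg.mpr hg')]
    · have hf' : f p.2 ≤ f p.1 :=
        one_div_le_one_div_of_le (by linarith) (by linarith)
      have hg' : g p.2 ≤ g p.1 :=
        one_div_le_one_div_of_le (by linarith) (by linarith)
      nlinarith [mul_nonneg (sub_nonneg.mpr hf') (sub_nonneg.mpr hg')]
  -- F is not a.e. zero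
  have hne : ¬ (F =ᵐ[μ] 0) := by
    intro hzero
    have hdiag : ∀ᵐ p ∂μ, p.1 = p.2 := by
      filter_upwards [hzero, hsp1, hsp2] with p hp h1 h2
      by_contra hne'
      rcases lt_or_gt_of_ne hne' with h | h
      · have hf' : f p.1 < f p.2 :=
          one_div_lt_one_div_of_lt (by linarith) (by linarith)
        have hg' : g p.1 < g p.2 :=
          one_div_lt_one_div_of_lt (by linarith) (by linarith)
        have hFp : 0 < F p := mul_pos_of_neg_of_neg (by linarith) (by linarith)
        simp only [Pi.zero_apply] at hp; linarith
      · have hf' : f p.2 < f p.1 :=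
          one_div_lt_one_div_of_lt (by linarith) (by linarith)
        have hg' : g p.2 < g p.1 :=
          one_div_lt_one_div_of_lt (by linarith) (by linarith)
        have hFp : 0 < F p := mul_pos (by linarith) (by linarith)
        simp only [Pi.zero_apply] at hp; linarith
    have hmeas : MeasurableSet {p : ℝ × ℝ | p.1 = p.2} :=
      measurableSet_eq_fun measurable_fst measurable_snd
    have hoff : μ {p : ℝ × ℝ | p.1 = p.2}ᶜ = 0 := by
      simpa [ae_iff, Set.compl_setOf] using hdiag
    rw [hμ, Measure.prod_apply hmeas.compl] at hoff
    have hmeasf : Measurable fun x : ℝ => ν (Prod.mk x ⁻¹' {p : ℝ × ℝ | p.1 = p.2}ᶜ) :=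
      measurable_measure_prodMk_left hmeas.compl
    rw [lintegral_eq_zero_iff hmeasf] at hoff
    haveI : (ae ν).NeBot := ae_neBot.mpr (IsProbabilityMeasure.ne_zero ν)
    obtain ⟨x₀, hx₀'⟩ := hoff.exists
    have hx₀ : ν ({x₀}ᶜ) = 0 := by
      simp only [Pi.zero_apply] at hx₀'
      convert hx₀' using 2
      ext y; simp [eq_comm]
    apply hnd x₀
    have hone' : ν {x₀} = 1 := by
      have h := measure_add_measure_compl (μ := ν) (measurableSet_singleton x₀)
      rw [hx₀, add_zero] at h
      simpa using h
    ext s hs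
    rw [Measure.dirac_apply' _ hs]
    by_cases hx : x₀ ∈ s
    · have h1 : ν s ≤ 1 := prob_le_one
      have h3 : ν {x₀} ≤ ν s := measure_mono (by simpa using hx)
      rw [Set.indicator_of_mem hx]
      simp only [Pi.one_apply]
      exact le_antisymm h1 (hone' ▸ h3)
    · have hsub : s ⊆ {x₀}ᶜ := fun y hy => by
        simp only [Set.mem_compl_iff, Set.mem_singleton_iff]
        rintro rfl; exact hx hy
      rw [Set.indicator_of_notMem hx]
      exact le_antisymm ((measure_mono hsub).trans hx₀.le) zero_le
  -- hence the integral of F is positive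
  have hpos : 0 < ∫ p, F p ∂μ := by
    rcases (integral_nonneg_of_ae hFnn).lt_or_eq with h | h
    · exact h
    · exact absurd ((integral_eq_zero_iff_of_nonneg_ae hFnn hFi).mp h.symm) hne
  rw [hFval] at hpos
  linarith

/-- If K is the compositional inverse of the Cauchy transform G
of a non-degenerate ν supported in (-∞,b], then the R-transform
𝓡(x) = K(x) - 1/x is strictly increasing on (0, G(b)) = G '' (b,∞). -/
theorem stmt16 (ν : Measure ℝ) [IsProbabilityMeasure ν]
    (hnd : ∀ c : ℝ, ν ≠ Measure.dirac c) (b : ℝ)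
    (hsupp : ∀ᵐ x ∂ν, x ≤ b) (K : ℝ → ℝ)
    (hK : ∀ z ∈ Ioi b, K (∫ x, 1 / (z - x) ∂ν) = z) :
    StrictMonoOn (fun x => K x - 1 / x)
      ((fun z => ∫ x, 1 / (z - x) ∂ν) '' Ioi b) := by
  set G : ℝ → ℝ := fun z => ∫ x, 1 / (z - x) ∂ν with hG
  haveI : (ae ν).NeBot := ae_neBot.mpr (IsProbabilityMeasure.ne_zero ν)
  have hGpos : ∀ z ∈ Ioi b, 0 < G z := by
    intro z hz
    have hzb : b < z := hz
    have hint := aux_integrable ν hsupp hzb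
    have hnn : 0 ≤ᵐ[ν] fun x => 1 / (z - x) := by
      filter_upwards [hsupp] with x hx
      have hzx : (0:ℝ) < z - x := by linarith
      exact (one_div_pos.mpr hzx).le
    rcases (integral_nonneg_of_ae hnn).lt_or_eq with h | h
    · exact h
    · exfalso
      have hzero := (integral_eq_zero_iff_of_nonneg_ae hnn hint).mp h.symm
      have hfalse : ∀ᵐ _x ∂ν, False := by
        filter_upwards [hzero, hsupp] with x hx0 hxb
        have hzx : (0:ℝ) < z - x := by linarith
        have := one_div_pos.mpr hzx
        simp only [Pi.zero_apply] at hx0; linarith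
      obtain ⟨_, hfa⟩ := hfalse.exists
      exact hfa
  have hkey : ∀ u v : ℝ, b < u → u < v → v - u < 1 / G v - 1 / G u := by
    intro u v hu huv
    have hv : b < v := lt_trans hu huv
    have h1 := aux_key ν hnd hsupp hu huv
    have hGu : 0 < G u := hGpos u hu
    have hGv : 0 < G v := hGpos v hv
    have hdiff : G u - G v = (v - u) * ∫ x, (1 / (u - x)) * (1 / (v - x)) ∂ν := by
      rw [hG]
      simp only
      rw [← integral_sub (aux_integrable ν hsupp hu) (aux_integrable ν hsupp hv),
        ← integral_const_mul]
      apply integral_congr_ae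
      filter_upwards [hsupp] with x hx
      have h2 : (0:ℝ) < u - x := by linarith
      have h3 : (0:ℝ) < v - x := by linarith
      field_simp
      ring
    have hI : G u * G v < ∫ x, (1 / (u - x)) * (1 / (v - x)) ∂ν := h1
    have hmul : (v - u) * (G u * G v) < (v - u) * ∫ x, (1 / (u - x)) * (1 / (v - x)) ∂ν :=
      (mul_lt_mul_iff_right₀ (by linarith)).mpr hI
    rw [← hdiff] at hmul
    rw [div_sub_div _ _ (ne_of_gt hGv) (ne_of_gt hGu), lt_div_iff₀ (by positivity)]
    nlinarith
  rintro x₁ ⟨z₁, hz₁, rfl⟩ x₂ ⟨z₂, hz₂, rfl⟩ hlt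
  simp only
  rw [hK z₁ hz₁, hK z₂ hz₂]
  have hanti : z₂ < z₁ := by
    by_contra h
    push_neg at h
    rcases h.lt_or_eq with h' | h'
    · have hk := hkey z₁ z₂ hz₁ h'
      have hGz₁ : 0 < G z₁ := hGpos z₁ hz₁
      have hGz₂ : 0 < G z₂ := hGpos z₂ hz₂
      have hlt' : 1 / G z₁ < 1 / G z₂ := by linarith
      have hGG : G z₂ < G z₁ := (one_div_lt_one_div hGz₁ hGz₂).mp hlt'
      have hltG : G z₁ < G z₂ := hlt
      linarith
    · subst h'; exact absurd hlt (lt_irrefl _)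
  have hk := hkey z₂ z₁ hz₂ hanti
  have e1 : (1:ℝ) / G z₁ = 1 / (∫ x, 1 / (z₁ - x) ∂ν) := rfl
  have e2 : (1:ℝ) / G z₂ = 1 / (∫ x, 1 / (z₂ - x) ∂ν) := rfl
  rw [← e1, ← e2] at *
  linarith
end

section
/- Let 𝕍_ν be the pseudo-variance function of the CSK family generated by ν (support bounded above), and let φ(ν) be the pushforward under x ↦ (x-γ)/δ with δ > 0. Then for m close enough to (m₀-γ)/δ in the domain of means of φ(ν): 𝕍_{φ(ν)}(m) = (m/(δ(mδ+γ))) · 𝕍_ν(δm + γ). -/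
open scoped ENNReal

open MeasureTheory Real Set Filter

/-- A probability measure giving full mass to a singleton is a Dirac measure. -/
lemma eq_dirac_of_compl (ν : Measure ℝ) [IsProbabilityMeasure ν] (c : ℝ)
    (h : ν {c}ᶜ = 0) : ν = Measure.dirac c := by
  have hc1 : ν {c} = 1 := by
    have hcompl := measure_compl (measurableSet_singleton c) (measure_ne_top ν {c})
    rw [h, measure_univ] at hcompl
    have : (1 : ℝ≥0∞) ≤ ν {c} := by
      rwa [eq_comm, tsub_eq_zero_iff_le] at hcompl
    exact le_antisymm prob_le_one this
  ext s hs
  rw [Measure.dirac_apply' _ hs]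
  by_cases hcs : c ∈ s
  · have h2 : (1 : ℝ≥0∞) ≤ ν s := hc1 ▸ measure_mono (Set.singleton_subset_iff.mpr hcs)
    rw [Set.indicator_of_mem hcs]
    exact le_antisymm prob_le_one h2
  · have h1 : ν s ≤ ν {c}ᶜ := measure_mono (fun x hx => by
      simp only [Set.mem_compl_iff, Set.mem_singleton_iff]
      rintro rfl; exact hcs hx)
    rw [Set.indicator_of_notMem hcs]
    exact le_antisymm (h1.trans_eq h) zero_le

lemma key_aux (ν : Measure ℝ) [IsProbabilityMeasure ν]
    (hnd : ∀ c : ℝ, ν ≠ Measure.dirac c) (B : ℝ) (hsupp : ∀ᵐ x ∂ν, x ≤ B)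
    (m' w v : ℝ) (hw : 0 < w) (hv : 0 < v) (hwv : w < v)
    (hzw : B < m' + w) (hzv : B < m' + v)
    (hGw : (∫ x, 1 / ((m' + w) - x) ∂ν) = 1 / w)
    (hGv : (∫ x, 1 / ((m' + v) - x) ∂ν) = 1 / v) : False := by
  set f : ℝ → ℝ := fun x => 1 / ((m' + w) - x) with hf_def
  set g : ℝ → ℝ := fun x => 1 / ((m' + v) - x) with hg_def
  have hfm : Measurable f := by
    simp only [hf_def, one_div]; exact (measurable_const.sub measurable_id).inv
  have hgm : Measurable g := by
    simp only [hg_def, one_div]; exact (measurable_const.sub measurable_id).inv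
  have hCw : 0 < m' + w - B := by linarith
  have hCv : 0 < m' + v - B := by linarith
  have hbnd : ∀ᵐ x ∂ν, (0 < f x ∧ f x ≤ 1 / (m' + w - B))
      ∧ (0 < g x ∧ g x ≤ 1 / (m' + v - B)) := by
    filter_upwards [hsupp] with x hx
    have h1 : 0 < (m' + w) - x := by linarith
    have h2 : 0 < (m' + v) - x := by linarith
    refine ⟨⟨one_div_pos.mpr h1, one_div_le_one_div_of_le hCw (by linarith)⟩,
      ⟨one_div_pos.mpr h2, one_div_le_one_div_of_le hCv (by linarith)⟩⟩
  have hfi : Integrable f ν := by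
    refine (integrable_const (1 / (m' + w - B))).mono' hfm.aestronglyMeasurable ?_
    filter_upwards [hbnd] with x hx
    rw [Real.norm_eq_abs, abs_of_pos hx.1.1]; exact hx.1.2
  have hgi : Integrable g ν := by
    refine (integrable_const (1 / (m' + v - B))).mono' hgm.aestronglyMeasurable ?_
    filter_upwards [hbnd] with x hx
    rw [Real.norm_eq_abs, abs_of_pos hx.2.1]; exact hx.2.2
  have hfgi : Integrable (fun x => f x * g x) ν := by
    refine (integrable_const ((1 / (m' + w - B)) * (1 / (m' + v - B)))).mono'
      (hfm.mul hgm).aestronglyMeasurable ?_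
    filter_upwards [hbnd] with x hx
    rw [Real.norm_eq_abs, abs_of_pos (mul_pos hx.1.1 hx.2.1)]
    exact mul_le_mul hx.1.2 hx.2.2 hx.2.1.le (by positivity)
  -- pointwise identity f - g = (v - w) f g
  have hptw : ∀ᵐ x ∂ν, f x - g x = (v - w) * (f x * g x) := by
    filter_upwards [hsupp] with x hx
    have h1 : (m' + w) - x ≠ 0 := by intro h; linarith [h]
    have h2 : (m' + v) - x ≠ 0 := by intro h; linarith [h]
    simp only [hf_def, hg_def]
    field_simp
    try ring
  -- ∫ f g = 1/(w v)
  have hIfg : ∫ x, f x * g x ∂ν = 1 / (w * v) := by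
    have h1 : ∫ x, (v - w) * (f x * g x) ∂ν = 1 / w - 1 / v := by
      rw [integral_congr_ae (hptw.mono fun x h => h.symm), integral_sub hfi hgi, hGw, hGv]
    rw [integral_const_mul (v - w)] at h1
    have hne : v - w ≠ 0 := sub_ne_zero.mpr hwv.ne'
    have h2 : (v - w) * (1 / (w * v)) = 1 / w - 1 / v := by
      field_simp
      try ring
    exact mul_left_cancel₀ hne (h1.trans h2.symm)
  -- product measure
  set pm : Measure (ℝ × ℝ) := ν.prod ν with hpm_def
  have hπsupp : ∀ᵐ p ∂pm, p.1 ≤ B ∧ p.2 ≤ B := by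
    have hν0 : ν {x : ℝ | ¬ x ≤ B} = 0 := hsupp
    have e1 : ∀ᵐ p ∂pm, p.1 ≤ B := by
      rw [ae_iff]
      have he : {p : ℝ × ℝ | ¬ p.1 ≤ B} = {x : ℝ | ¬ x ≤ B} ×ˢ (Set.univ : Set ℝ) := by
        ext p; simp
      rw [he, hpm_def, Measure.prod_prod, hν0, zero_mul]
    have e2 : ∀ᵐ p ∂pm, p.2 ≤ B := by
      rw [ae_iff]
      have he : {p : ℝ × ℝ | ¬ p.2 ≤ B} = (Set.univ : Set ℝ) ×ˢ {x : ℝ | ¬ x ≤ B} := by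
        ext p; simp
      rw [he, hpm_def, Measure.prod_prod, hν0, mul_zero]
    exact e1.and e2
  set F : ℝ × ℝ → ℝ := fun p => (f p.1 - f p.2) * (g p.1 - g p.2) with hF_def
  -- a.e. representation of F as a nonnegative quotient
  have hrep : ∀ᵐ p ∂pm, F p = (p.1 - p.2) ^ 2 /
      (((m' + w) - p.1) * (((m' + w) - p.2) * (((m' + v) - p.1) * ((m' + v) - p.2))))
      ∧ 0 < ((m' + w) - p.1) * (((m' + w) - p.2) * (((m' + v) - p.1) * ((m' + v) - p.2))) := by
    filter_upwards [hπsupp] with p hp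
    have a1 : 0 < (m' + w) - p.1 := by linarith [hp.1]
    have a2 : 0 < (m' + w) - p.2 := by linarith [hp.2]
    have b1 : 0 < (m' + v) - p.1 := by linarith [hp.1]
    have b2 : 0 < (m' + v) - p.2 := by linarith [hp.2]
    constructor
    · simp only [hF_def, hf_def, hg_def]
      field_simp
      ring
    · positivity
  -- integrability of the four product terms
  have t1 : Integrable (fun p => f p.1 * g p.1) pm := by
    have := hfgi.mul_prod (integrable_const (1 : ℝ)) (ν := ν)
    simpa using this
  have t2 : Integrable (fun p => f p.1 * g p.2) pm := hfi.mul_prod hgi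
  have t3 : Integrable (fun p => f p.2 * g p.1) pm :=
    (hgi.mul_prod hfi).congr (Eventually.of_forall fun p => mul_comm _ _)
  have t4 : Integrable (fun p => f p.2 * g p.2) pm := by
    have := (integrable_const (1 : ℝ)).mul_prod hfgi (μ := ν)
    simpa using this
  have hFeq : F = fun p => f p.1 * g p.1 - f p.1 * g p.2 - f p.2 * g p.1 + f p.2 * g p.2 := by
    funext p; simp only [hF_def]; ring
  have hFint : Integrable F pm := by
    rw [hFeq]; exact ((t1.sub t2).sub t3).add t4
  -- value of ∫ F
  have e1 : ∫ p, f p.1 * g p.1 ∂pm = 1 / (w * v) := by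
    have := integral_prod_mul (μ := ν) (ν := ν) (fun x => f x * g x) (fun _ => (1 : ℝ))
    simpa [hIfg] using this
  have e2 : ∫ p, f p.1 * g p.2 ∂pm = 1 / w * (1 / v) := by
    have := integral_prod_mul (μ := ν) (ν := ν) f g
    rw [hGw, hGv] at this
    exact this
  have e3 : ∫ p, f p.2 * g p.1 ∂pm = 1 / w * (1 / v) := by
    have := integral_prod_mul (μ := ν) (ν := ν) g f
    rw [hGw, hGv] at this
    rw [show (fun p : ℝ × ℝ => f p.2 * g p.1) = fun p : ℝ × ℝ => g p.1 * f p.2 from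
      funext fun p => mul_comm _ _, this]
    ring
  have e4 : ∫ p, f p.2 * g p.2 ∂pm = 1 / (w * v) := by
    have := integral_prod_mul (μ := ν) (ν := ν) (fun _ => (1 : ℝ)) (fun x => f x * g x)
    simpa [hIfg] using this
  have t12 : Integrable (fun p => f p.1 * g p.1 - f p.1 * g p.2) pm := t1.sub t2
  have t123 : Integrable
      (fun p => f p.1 * g p.1 - f p.1 * g p.2 - f p.2 * g p.1) pm := t12.sub t3
  have hFval : ∫ p, F p ∂pm = 0 := by
    have h12 : ∫ p, (f p.1 * g p.1 - f p.1 * g p.2) ∂pm = 1 / (w * v) - 1 / w * (1 / v) := by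
      rw [integral_sub t1 t2, e1, e2]
    have h123 : ∫ p, (f p.1 * g p.1 - f p.1 * g p.2 - f p.2 * g p.1) ∂pm
        = 1 / (w * v) - 1 / w * (1 / v) - 1 / w * (1 / v) := by
      rw [integral_sub t12 t3, h12, e3]
    have h1234 : ∫ p, (f p.1 * g p.1 - f p.1 * g p.2 - f p.2 * g p.1 + f p.2 * g p.2) ∂pm
        = 1 / (w * v) - 1 / w * (1 / v) - 1 / w * (1 / v) + 1 / (w * v) := by
      rw [integral_add t123 t4, h123, e4]
    have hval : (1 : ℝ) / (w * v) - 1 / w * (1 / v) - 1 / w * (1 / v) + 1 / (w * v) = 0 := by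
      rw [div_mul_div_comm, one_mul]; ring
    simp only [hFeq]
    rw [h1234, hval]
  have hFnn : ∀ᵐ p ∂pm, 0 ≤ F p := by
    filter_upwards [hrep] with p hp
    rw [hp.1]
    exact div_nonneg (sq_nonneg _) hp.2.le
  have hF0 : F =ᵐ[pm] 0 := (integral_eq_zero_iff_of_nonneg_ae hFnn hFint).mp hFval
  have hdiag : ∀ᵐ p ∂pm, p.1 = p.2 := by
    filter_upwards [hrep, hF0] with p hp hz
    have hz' : (p.1 - p.2) ^ 2 /
        (((m' + w) - p.1) * (((m' + w) - p.2) * (((m' + v) - p.1) * ((m' + v) - p.2)))) = 0 := by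
      rw [← hp.1]; exact hz
    rcases div_eq_zero_iff.mp hz' with h | h
    · have := (pow_eq_zero_iff two_ne_zero).mp h
      linarith [sub_eq_zero.mp this]
    · exact absurd h hp.2.ne'
  -- ν is Dirac: contradiction
  have hDm : MeasurableSet {p : ℝ × ℝ | p.1 = p.2} :=
    measurable_fst.stronglyMeasurable.measurableSet_eq_fun measurable_snd.stronglyMeasurable
  have hcompl0 : pm {p : ℝ × ℝ | p.1 = p.2}ᶜ = 0 := by
    have : {p : ℝ × ℝ | p.1 = p.2}ᶜ = {p : ℝ × ℝ | ¬ p.1 = p.2} := rfl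
    rw [this]
    exact ae_iff.mp hdiag
  rw [hpm_def, Measure.prod_apply hDm.compl] at hcompl0
  have hmeas' : Measurable (fun x : ℝ => ν (Prod.mk x ⁻¹' {p : ℝ × ℝ | p.1 = p.2}ᶜ)) :=
    measurable_measure_prodMk_left hDm.compl
  have hae0 := (lintegral_eq_zero_iff hmeas').mp hcompl0
  haveI : (ae ν).NeBot := ae_neBot.mpr (IsProbabilityMeasure.ne_zero ν)
  obtain ⟨c, hc⟩ := hae0.exists
  have hc' : ν {c}ᶜ = 0 := by
    have hset : Prod.mk c ⁻¹' {p : ℝ × ℝ | p.1 = p.2}ᶜ = ({c} : Set ℝ)ᶜ := by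
      ext y; simp [eq_comm]
    have hc2 : ν (Prod.mk c ⁻¹' {p : ℝ × ℝ | p.1 = p.2}ᶜ) = 0 := by simpa using hc
    rwa [hset] at hc2
  exact hnd c (eq_dirac_of_compl ν c hc')

lemma key (ν : Measure ℝ) [IsProbabilityMeasure ν]
    (hnd : ∀ c : ℝ, ν ≠ Measure.dirac c) (B : ℝ) (hsupp : ∀ᵐ x ∂ν, x ≤ B)
    (m' w v : ℝ) (hw : 0 < w) (hv : 0 < v)
    (hzw : B < m' + w) (hzv : B < m' + v)
    (hGw : (∫ x, 1 / ((m' + w) - x) ∂ν) = 1 / w)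
    (hGv : (∫ x, 1 / ((m' + v) - x) ∂ν) = 1 / v) : w = v := by
  rcases lt_trichotomy w v with h | h | h
  · exact (key_aux ν hnd B hsupp m' w v hw hv h hzw hzv hGw hGv).elim
  · exact h
  · exact (key_aux ν hnd B hsupp m' v w hv hw h hzv hzw hGv hGw).elim

/-- If Vν and Vφ are the pseudo-variance functions of the CSK
families generated by ν and by its image φ(ν) under x ↦ (x-γ)/δ (δ > 0),
characterized on their domains of means Dν, Dφ by the Cauchy-transform
relation G(m + V(m)/m) = m/V(m) (with G_{φ(ν)}(z) = δ G_ν(δz+γ)), then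
Vφ(m) = (m/(δ(mδ+γ))) Vν(δm+γ). -/
theorem stmt18 (ν : Measure ℝ) [IsProbabilityMeasure ν]
    (hnd : ∀ c : ℝ, ν ≠ Measure.dirac c)
    (B γ δ : ℝ) (hδ : 0 < δ) (hB : 0 ≤ B) (hsupp : ∀ᵐ x ∂ν, x ≤ B)
    (Vν Vφ : ℝ → ℝ) (Dν Dφ : Set ℝ)
    (hVν : ∀ m ∈ Dν, m ≠ 0 ∧ Vν m ≠ 0 ∧ B < m + Vν m / m ∧
      (∫ x, 1 / ((m + Vν m / m) - x) ∂ν) = m / Vν m)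
    (hVφ : ∀ m ∈ Dφ, m ≠ 0 ∧ Vφ m ≠ 0 ∧ B < δ * (m + Vφ m / m) + γ ∧
      δ * (∫ x, 1 / ((δ * (m + Vφ m / m) + γ) - x) ∂ν) = m / Vφ m)
    (m : ℝ) (hm : m ∈ Dφ) (hm' : δ * m + γ ∈ Dν)
    (hw : 0 < δ * Vφ m / m) (hv : 0 < Vν (δ * m + γ) / (δ * m + γ)) :
    Vφ m = (m / (δ * (m * δ + γ))) * Vν (δ * m + γ) := by
  obtain ⟨hm2, hVφ2, hB2, hG2⟩ := hVφ m hm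
  obtain ⟨hm1, hVν1, hB1, hG1⟩ := hVν _ hm'
  have harg : δ * (m + Vφ m / m) + γ = (δ * m + γ) + δ * Vφ m / m := by
    field_simp
    ring
  rw [harg] at hB2 hG2
  -- the w-equation
  have hGw : (∫ x, 1 / (((δ * m + γ) + δ * Vφ m / m) - x) ∂ν) = 1 / (δ * Vφ m / m) := by
    have hI : (∫ x, 1 / (((δ * m + γ) + δ * Vφ m / m) - x) ∂ν) = m / Vφ m / δ := by
      rw [← hG2, mul_div_cancel_left₀ _ hδ.ne']
    rw [hI, one_div_div, div_div, mul_comm (Vφ m) δ]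
  -- the v-equation
  have hGv : (∫ x, 1 / (((δ * m + γ) + Vν (δ * m + γ) / (δ * m + γ)) - x) ∂ν)
      = 1 / (Vν (δ * m + γ) / (δ * m + γ)) := by
    rw [hG1, one_div_div]
  have hkey := key ν hnd B hsupp (δ * m + γ) (δ * Vφ m / m) (Vν (δ * m + γ) / (δ * m + γ))
    hw hv hB2 hB1 hGw hGv
  rw [show m * δ + γ = δ * m + γ from by ring]
  field_simp at hkey ⊢
  linear_combination hkey
end
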